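/- Let F1, F2 be forests on I with disjoint supports. Then there is exactly one pair (F, V1 ⊔ V2 = V(F)) with F1 ∈ γ(F,V1) and F2 ∈ γ(F,V2): namely F is the unique forest with Supp(F) = Supp(F1) ⊔ Supp(F2) that coincides with F1 on Supp(F1) and with F2 on Supp(F2). -/
import Mathlib


open Finset

/-- A forest of leaf-labeled rooted binary trees on a ground set of labels,
encoded by the family of "clades": for each inner vertex, the set of its
ancestor leaves. Laminarity plus the binary splitting condition exactly
characterize such forests, and inner vertices correspond bijectively to clades. -/
structure Forest (I : Type*) [DecidableEq I] where
  ground : Finset I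
  clades : Finset (Finset I)
  subset_ground : ∀ C ∈ clades, C ⊆ ground
  laminar : ∀ C ∈ clades, ∀ D ∈ clades, C ⊆ D ∨ D ⊆ C ∨ Disjoint C D
  binary : ∀ C ∈ clades, ∃ A B : Finset I,
      (A ∈ clades ∨ ∃ x, A = {x}) ∧ (B ∈ clades ∨ ∃ x, B = {x}) ∧
      Disjoint A B ∧ A ∪ B = C ∧ A ≠ C ∧ B ≠ C

namespace Forest

variable {I : Type*} [DecidableEq I]

/-- The partial order on forests of the paper: `F' ≤ F` iff there is an injection
of the inner vertices of `F'` into those of `F` which enlarges ancestor-leaf sets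
and preserves the ancestor relation among inner vertices. -/
def Le (F' F : Forest I) : Prop :=
  F'.ground = F.ground ∧ ∃ φ : Finset I → Finset I,
    Set.InjOn φ (F'.clades : Set (Finset I)) ∧
    (∀ C ∈ F'.clades, φ C ∈ F.clades) ∧
    (∀ C ∈ F'.clades, C ⊆ φ C) ∧
    (∀ C ∈ F'.clades, ∀ D ∈ F'.clades, C ⊆ D → φ C ⊆ φ D)

/-- `γ(F,V)`: the set of forests `F' ≤ F` whose inner vertices are identified,
via the order-defining injection, with the subset `V` of inner vertices of `F`. -/
def gamma (F : Forest I) (V : Finset (Finset I)) : Set (Forest I) :=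
  {F' | F'.ground = F.ground ∧ ∃ φ : Finset I → Finset I,
    Set.InjOn φ (F'.clades : Set (Finset I)) ∧
    (∀ C ∈ F'.clades, φ C ∈ F.clades) ∧
    (∀ C ∈ F'.clades, C ⊆ φ C) ∧
    (∀ C ∈ F'.clades, ∀ D ∈ F'.clades, C ⊆ D → φ C ⊆ φ D) ∧
    F'.clades.image φ = V}

/-- A forest consisting of a single tree. -/
def IsTree (F : Forest I) : Prop :=
  F.ground.Nonempty ∧ (F.ground ∈ F.clades ∨ F.ground.card = 1)

/-- The support: leaves whose path to the root contains at least one inner vertex. -/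
def supp (F : Forest I) : Finset I := F.clades.sup id

/-- The leaf-label sets of the trees of the forest: maximal clades together with
the singletons of labels not lying in any clade. -/
def rootBlocks (F : Forest I) : Finset (Finset I) :=
  F.clades.filter (fun C => ∀ D ∈ F.clades, C ⊆ D → C = D) ∪
  (F.ground.filter (fun x => ∀ C ∈ F.clades, x ∉ C)).image
    (fun x => ({x} : Finset I))

end Forest


namespace Stmt13Aux

variable {I : Type*} [DecidableEq I]

def Lam (A : Finset (Finset I)) : Prop :=
  ∀ C ∈ A, ∀ D ∈ A, C ⊆ D ∨ D ⊆ C ∨ Disjoint C D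

def Bin (A : Finset (Finset I)) : Prop :=
  ∀ C ∈ A, ∃ X Y : Finset I,
    (X ∈ A ∨ ∃ x, X = {x}) ∧ (Y ∈ A ∨ ∃ x, Y = {x}) ∧
    Disjoint X Y ∧ X ∪ Y = C ∧ X ≠ C ∧ Y ≠ C

lemma two_le_card {A : Finset (Finset I)} (hB : Bin A) {C : Finset I} (hC : C ∈ A) :
    2 ≤ C.card := by
  obtain ⟨X, Y, _, _, hdisj, hun, hXC, hYC⟩ := hB C hC
  have hXne : X.Nonempty := by
    rcases X.eq_empty_or_nonempty with h | h
    · exact absurd (by simpa [h] using hun) hYC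
    · exact h
  have hYne : Y.Nonempty := by
    rcases Y.eq_empty_or_nonempty with h | h
    · exact absurd (by simpa [h] using hun) hXC
    · exact h
  have hcard := Finset.card_union_of_disjoint hdisj
  rw [hun] at hcard
  have := hXne.card_pos
  have := hYne.card_pos
  omega

lemma nonempty_of_mem {A : Finset (Finset I)} (hB : Bin A) {C : Finset I} (hC : C ∈ A) :
    C.Nonempty := by
  have := two_le_card hB hC
  exact Finset.card_pos.mp (by omega)

lemma part_split {A : Finset (Finset I)} (hL : Lam A) (hB : Bin A)
    {C X Y E : Finset I} (hC : C ∈ A)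
    (hX : X ∈ A ∨ ∃ x, X = {x}) (hY : Y ∈ A ∨ ∃ x, Y = {x})
    (hdisj : Disjoint X Y) (hun : X ∪ Y = C) (hXC : X ≠ C) (hYC : Y ≠ C)
    (hE : E ∈ A) (hEC : E ⊆ C) (hne : E ≠ C) : E ⊆ X ∨ E ⊆ Y := by
  have hEne : E.Nonempty := nonempty_of_mem hB hE
  have hsubX : Disjoint E Y → E ⊆ X := by
    intro h a ha
    have : a ∈ X ∪ Y := by rw [hun]; exact hEC ha
    rcases Finset.mem_union.mp this with h' | h'
    · exact h'
    · exact absurd h' (Finset.disjoint_left.mp h ha)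
  have hsubY : Disjoint E X → E ⊆ Y := by
    intro h a ha
    have : a ∈ X ∪ Y := by rw [hun]; exact hEC ha
    rcases Finset.mem_union.mp this with h' | h'
    · exact absurd h' (Finset.disjoint_left.mp h ha)
    · exact h'
  rcases hX with hXA | ⟨x, rfl⟩
  · rcases hL E hE X hXA with h | h | h
    · exact Or.inl h
    · rcases hY with hYA | ⟨y, rfl⟩
      · rcases hL E hE Y hYA with h2 | h2 | h2
        · exfalso
          obtain ⟨a, ha⟩ := nonempty_of_mem hB hXA
          exact Finset.disjoint_left.mp hdisj ha (h2 (h ha))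
        · exact absurd (Finset.Subset.antisymm hEC (hun ▸ Finset.union_subset h h2)) hne
        · exact Or.inl (hsubX h2)
      · by_cases hy : y ∈ E
        · exfalso
          apply hne
          refine Finset.Subset.antisymm hEC ?_
          rw [← hun]
          exact Finset.union_subset h (Finset.singleton_subset_iff.mpr hy)
        · exact Or.inl (hsubX (Finset.disjoint_singleton_right.mpr hy))
    · exact Or.inr (hsubY h)
  · rcases hY with hYA | ⟨y, rfl⟩
    · rcases hL E hE Y hYA with h | h | h
      · exact Or.inr h
      · by_cases hx : x ∈ E
        · exfalso
          apply hne
          refine Finset.Subset.antisymm hEC ?_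
          rw [← hun]
          exact Finset.union_subset (Finset.singleton_subset_iff.mpr hx) h
        · exact Or.inr (hsubY (Finset.disjoint_singleton_right.mpr hx))
      · exact Or.inl (hsubX h)
    · exfalso
      have h2 : 2 ≤ E.card := two_le_card hB hE
      have hCcard : C.card ≤ 2 := by
        rw [← hun]
        exact le_trans (Finset.card_union_le _ _) (by simp)
      have : E.card < C.card :=
        Finset.card_lt_card (Finset.ssubset_iff_subset_ne.mpr ⟨hEC, hne⟩)
      omega

/-- For each clade, the number of clades contained in it is its cardinality minus one. -/
lemma count_below {A : Finset (Finset I)} (hL : Lam A) (hB : Bin A) :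
    ∀ n : ℕ, ∀ C ∈ A, C.card ≤ n → (A.filter (· ⊆ C)).card + 1 = C.card := by
  intro n
  induction n with
  | zero => intro C hC h; have := two_le_card hB hC; omega
  | succ n ih =>
    intro C hC hcard
    obtain ⟨X, Y, hX, hY, hdisj, hun, hXC, hYC⟩ := hB C hC
    have hXsub : X ⊆ C := hun ▸ Finset.subset_union_left
    have hYsub : Y ⊆ C := hun ▸ Finset.subset_union_right
    have hXlt : X.card < C.card :=
      Finset.card_lt_card (Finset.ssubset_iff_subset_ne.mpr ⟨hXsub, hXC⟩)
    have hYlt : Y.card < C.card :=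
      Finset.card_lt_card (Finset.ssubset_iff_subset_ne.mpr ⟨hYsub, hYC⟩)
    have key : ∀ Z : Finset I, (Z ∈ A ∨ ∃ x, Z = {x}) → Z.card < C.card →
        (A.filter (· ⊆ Z)).card + 1 = Z.card := by
      intro Z hZ hlt
      rcases hZ with hZA | ⟨x, rfl⟩
      · exact ih Z hZA (by omega)
      · have : A.filter (· ⊆ ({x} : Finset I)) = ∅ := by
          rw [Finset.filter_eq_empty_iff]
          intro E hE hsub
          have h2 := two_le_card hB hE
          have := Finset.card_le_card hsub
          simp at this; omega
        rw [this]; simp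
    have hkX := key X hX hXlt
    have hkY := key Y hY hYlt
    have hsplit : A.filter (· ⊆ C) = insert C ((A.filter (· ⊆ X)) ∪ (A.filter (· ⊆ Y))) := by
      ext E
      simp only [Finset.mem_filter, Finset.mem_insert, Finset.mem_union]
      constructor
      · rintro ⟨hE, hEC⟩
        by_cases hne : E = C
        · exact Or.inl hne
        · rcases part_split hL hB hC hX hY hdisj hun hXC hYC hE hEC hne with h | h
          · exact Or.inr (Or.inl ⟨hE, h⟩)
          · exact Or.inr (Or.inr ⟨hE, h⟩)
      · rintro (rfl | ⟨hE, h⟩ | ⟨hE, h⟩)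
        · exact ⟨hC, Finset.Subset.refl _⟩
        · exact ⟨hE, h.trans hXsub⟩
        · exact ⟨hE, h.trans hYsub⟩
    have hCnot : C ∉ (A.filter (· ⊆ X)) ∪ (A.filter (· ⊆ Y)) := by
      simp only [Finset.mem_union, Finset.mem_filter]
      rintro (⟨-, h⟩ | ⟨-, h⟩)
      · exact hXC (Finset.Subset.antisymm hXsub h)
      · exact hYC (Finset.Subset.antisymm hYsub h)
    have hdisjf : Disjoint (A.filter (· ⊆ X)) (A.filter (· ⊆ Y)) := by
      rw [Finset.disjoint_left]
      intro E hEX hEY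
      simp only [Finset.mem_filter] at hEX hEY
      obtain ⟨a, ha⟩ := nonempty_of_mem hB hEX.1
      exact Finset.disjoint_left.mp hdisj (hEX.2 ha) (hEY.2 ha)
    have hcardC : X.card + Y.card = C.card := by
      rw [← hun]; exact (Finset.card_union_of_disjoint hdisj).symm
    rw [hsplit, Finset.card_insert_of_notMem hCnot, Finset.card_union_of_disjoint hdisjf]
    omega

def maxSet (A : Finset (Finset I)) : Finset (Finset I) :=
  A.filter (fun C => ∀ D ∈ A, C ⊆ D → C = D)

lemma maxSet_subset {A : Finset (Finset I)} : maxSet A ⊆ A := Finset.filter_subset _ _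

lemma exists_max {A : Finset (Finset I)} {C : Finset I} (hC : C ∈ A) :
    ∃ M ∈ maxSet A, C ⊆ M := by
  have hne : (A.filter (fun D => C ⊆ D)).Nonempty := ⟨C, by simp [hC]⟩
  obtain ⟨M, hM, hmax⟩ := Finset.exists_max_image _ (fun D => D.card) hne
  simp only [Finset.mem_filter] at hM
  refine ⟨M, ?_, hM.2⟩
  simp only [maxSet, Finset.mem_filter]
  refine ⟨hM.1, fun D hD hMD => ?_⟩
  have hDf : D ∈ A.filter (fun D => C ⊆ D) := by simp [hD, hM.2.trans hMD]
  exact Finset.eq_of_subset_of_card_le hMD (hmax D hDf)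

lemma max_disjoint {A : Finset (Finset I)} (hL : Lam A) {M N : Finset I}
    (hM : M ∈ maxSet A) (hN : N ∈ maxSet A) (hne : M ≠ N) : Disjoint M N := by
  simp only [maxSet, Finset.mem_filter] at hM hN
  rcases hL M hM.1 N hN.1 with h | h | h
  · exact absurd (hM.2 N hN.1 h) hne
  · exact absurd (hN.2 M hM.1 h).symm hne
  · exact h

lemma biUnion_max {A : Finset (Finset I)} (hL : Lam A) (hB : Bin A) :
    A = (maxSet A).biUnion (fun M => A.filter (· ⊆ M)) := by
  ext C
  simp only [Finset.mem_biUnion, Finset.mem_filter]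
  constructor
  · intro hC
    obtain ⟨M, hM, hCM⟩ := exists_max hC
    exact ⟨M, hM, hC, hCM⟩
  · rintro ⟨M, hM, hC, -⟩; exact hC

lemma supp_eq_sup_max {A : Finset (Finset I)} (hL : Lam A) (hB : Bin A) :
    A.sup id = (maxSet A).sup id := by
  apply le_antisymm
  · apply Finset.sup_le
    intro C hC
    obtain ⟨M, hM, hCM⟩ := exists_max hC
    exact le_trans hCM (Finset.le_sup (f := id) hM)
  · exact Finset.sup_le fun M hM => Finset.le_sup (f := id) (maxSet_subset hM)

lemma card_add_max {A : Finset (Finset I)} (hL : Lam A) (hB : Bin A) :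
    A.card + (maxSet A).card = (A.sup id).card := by
  have hdisjf : ∀ M ∈ maxSet A, ∀ N ∈ maxSet A, M ≠ N →
      Disjoint (A.filter (· ⊆ M)) (A.filter (· ⊆ N)) := by
    intro M hM N hN hne
    rw [Finset.disjoint_left]
    intro E hEM hEN
    simp only [Finset.mem_filter] at hEM hEN
    obtain ⟨a, ha⟩ := nonempty_of_mem hB hEM.1
    exact Finset.disjoint_left.mp (max_disjoint hL hM hN hne) (hEM.2 ha) (hEN.2 ha)
  have h1 : A.card = ∑ M ∈ maxSet A, (A.filter (· ⊆ M)).card := by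
    conv_lhs => rw [biUnion_max hL hB]
    exact Finset.card_biUnion hdisjf
  have h2 : (A.sup id).card = ∑ M ∈ maxSet A, M.card := by
    rw [supp_eq_sup_max hL hB, Finset.sup_eq_biUnion]
    exact Finset.card_biUnion (fun M hM N hN hne => max_disjoint hL hM hN hne)
  have h3 : ∀ M ∈ maxSet A, (A.filter (· ⊆ M)).card + 1 = M.card := by
    intro M hM
    exact count_below hL hB M.card M (maxSet_subset hM) le_rfl
  rw [h1, h2, Finset.card_eq_sum_ones (maxSet A), ← Finset.sum_add_distrib]
  exact Finset.sum_congr rfl h3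

lemma lam_subset {A B : Finset (Finset I)} (hL : Lam A) (h : B ⊆ A) : Lam B :=
  fun C hC D hD => hL C (h hC) D (h hD)

lemma bin_filter {A : Finset (Finset I)} (hB : Bin A) (M : Finset I) :
    Bin (A.filter (fun C => C ⊆ M ∧ C ≠ M)) := by
  intro E hE
  simp only [Finset.mem_filter] at hE
  obtain ⟨hEA, hEM, hEne⟩ := hE
  obtain ⟨X, Y, hX, hY, hdisj, hun, hXE, hYE⟩ := hB E hEA
  have hXsub : X ⊆ E := hun ▸ Finset.subset_union_left
  have hYsub : Y ⊆ E := hun ▸ Finset.subset_union_right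
  have hpart : ∀ Z : Finset I, Z ∈ A ∨ (∃ x, Z = {x}) → Z ⊆ E →
      Z ∈ A.filter (fun C => C ⊆ M ∧ C ≠ M) ∨ ∃ x, Z = {x} := by
    intro Z hZ hZE
    rcases hZ with hZA | h
    · left
      simp only [Finset.mem_filter]
      refine ⟨hZA, hZE.trans hEM, ?_⟩
      rintro rfl
      exact hEne (Finset.Subset.antisymm hEM hZE)
    · exact Or.inr h
  exact ⟨X, Y, hpart X hX hXsub, hpart Y hY hYsub, hdisj, hun, hXE, hYE⟩

lemma rigid : ∀ n : ℕ, ∀ (A B : Finset (Finset I)) (φ : Finset I → Finset I),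
    A.card ≤ n → Lam A → Bin A → Lam B → Bin B →
    Set.InjOn φ (A : Set (Finset I)) → (∀ C ∈ A, φ C ∈ B) → (∀ C ∈ A, C ⊆ φ C) →
    (∀ C ∈ A, ∀ D ∈ A, C ⊆ D → φ C ⊆ φ D) → A.image φ = B →
    ∀ C ∈ A, φ C = C := by
  intro n
  induction n with
  | zero =>
    intro A B φ hn _ _ _ _ _ _ _ _ _ C hC
    have : A = ∅ := Finset.card_eq_zero.mp (Nat.le_antisymm hn (Nat.zero_le _))
    simp [this] at hC
  | succ n ih =>
    intro A B φ hn hLA hBA hLB hBB hinj hmap hsub hmono himg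
    have hcardAB : A.card = B.card := by rw [← himg, Finset.card_image_of_injOn hinj]
    have hsupp : A.sup id ⊆ B.sup id := by
      intro x hx
      rw [Finset.mem_sup] at hx ⊢
      obtain ⟨C, hC, hxC⟩ := hx
      exact ⟨φ C, hmap C hC, hsub C hC hxC⟩
    have hNex : ∀ M : Finset I, ∃ N, M ∈ maxSet A → N ∈ maxSet B ∧ φ M ⊆ N := by
      intro M
      by_cases h : M ∈ maxSet A
      · obtain ⟨N, hN, hs⟩ := exists_max (hmap M (maxSet_subset h))
        exact ⟨N, fun _ => ⟨hN, hs⟩⟩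
      · exact ⟨∅, fun h' => absurd h' h⟩
    choose theN htheN using hNex
    have hNsurj : ∀ N ∈ maxSet B, ∃ M ∈ maxSet A, theN M = N := by
      intro N hN
      have hNB : N ∈ B := maxSet_subset hN
      rw [← himg] at hNB
      obtain ⟨C, hC, hφC⟩ := Finset.mem_image.mp hNB
      obtain ⟨M, hM, hCM⟩ := exists_max hC
      refine ⟨M, hM, ?_⟩
      have h1 : φ C ⊆ φ M := hmono C hC M (maxSet_subset hM) hCM
      have h2 : N ⊆ theN M := hφC ▸ (h1.trans (htheN M hM).2)
      have hNmax : ∀ D ∈ B, N ⊆ D → N = D := by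
        simp only [maxSet, Finset.mem_filter] at hN
        exact hN.2
      exact (hNmax (theN M) (maxSet_subset (htheN M hM).1) h2).symm
    have hmBA : (maxSet B).card ≤ (maxSet A).card := by
      apply Finset.card_le_card_of_surjOn theN
      intro N hN
      obtain ⟨M, hM, hMN⟩ := hNsurj N (Finset.mem_coe.mp hN)
      exact ⟨M, Finset.mem_coe.mpr hM, hMN⟩
    have hcA := card_add_max hLA hBA
    have hcB := card_add_max hLB hBB
    have hsAB : (A.sup id).card ≤ (B.sup id).card := Finset.card_le_card hsupp
    have hsuppcard : (A.sup id).card = (B.sup id).card := by omega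
    have hmeq : (maxSet A).card = (maxSet B).card := by omega
    have hsuppeq : A.sup id = B.sup id :=
      Finset.eq_of_subset_of_card_le hsupp (le_of_eq hsuppcard.symm)
    have hNmaps : ∀ M ∈ maxSet A, theN M ∈ maxSet B := fun M hM => (htheN M hM).1
    have hNinj : ∀ M1 ∈ maxSet A, ∀ M2 ∈ maxSet A, theN M1 = theN M2 → M1 = M2 := by
      intro M1 h1 M2 h2 heq
      exact Finset.inj_on_of_surj_on_of_card_le (fun M _ => theN M)
        (fun M hM => hNmaps M hM)
        (fun N hN => by obtain ⟨M, hM, hMN⟩ := hNsurj N hN; exact ⟨M, hM, hMN⟩)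
        (le_of_eq hmeq) h1 h2 heq
    have hNimg : (maxSet A).image theN = maxSet B := by
      apply Finset.eq_of_subset_of_card_le
      · intro N hN
        obtain ⟨M, hM, rfl⟩ := Finset.mem_image.mp hN
        exact hNmaps M hM
      · rw [Finset.card_image_of_injOn (fun M1 h1 M2 h2 => hNinj M1 h1 M2 h2)]
        exact le_of_eq hmeq.symm
    have hsumA : ∑ M ∈ maxSet A, M.card = (A.sup id).card := by
      rw [supp_eq_sup_max hLA hBA, Finset.sup_eq_biUnion]
      exact (Finset.card_biUnion (fun M hM N hN hne => max_disjoint hLA hM hN hne)).symm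
    have hsumB : ∑ M ∈ maxSet A, (theN M).card = (B.sup id).card := by
      have h := Finset.sum_image (f := fun N : Finset I => N.card) (g := theN)
        (s := maxSet A) hNinj
      rw [hNimg] at h
      rw [← h, supp_eq_sup_max hLB hBB, Finset.sup_eq_biUnion]
      exact (Finset.card_biUnion (fun M hM N hN hne => max_disjoint hLB hM hN hne)).symm
    have hterm : ∀ M ∈ maxSet A, M.card ≤ (theN M).card := by
      intro M hM
      exact Finset.card_le_card ((hsub M (maxSet_subset hM)).trans (htheN M hM).2)
    have htermeq : ∀ M ∈ maxSet A, M.card = (theN M).card := by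
      rw [← Finset.sum_eq_sum_iff_of_le hterm, hsumA, hsumB, hsuppcard]
    have hmaxfix : ∀ M ∈ maxSet A, φ M = M := by
      intro M hM
      have hMN : M = theN M :=
        Finset.eq_of_subset_of_card_le
          ((hsub M (maxSet_subset hM)).trans (htheN M hM).2)
          (le_of_eq (htermeq M hM).symm)
      have h1 : φ M ⊆ M := by
        have h0 := (htheN M hM).2
        rwa [← hMN] at h0
      exact Finset.Subset.antisymm h1 (hsub M (maxSet_subset hM))
    have hrec : ∀ M ∈ maxSet A, ∀ C ∈ A, C ⊆ M → C ≠ M → φ C = C := by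
      intro M hM C hC hCM hne
      have hMA : M ∈ A := maxSet_subset hM
      have hMB : M ∈ B := (hmaxfix M hM) ▸ hmap M hMA
      have hAsub : (A.filter (fun C => C ⊆ M ∧ C ≠ M)) ⊆ A := Finset.filter_subset _ _
      have hBsub : (B.filter (fun C => C ⊆ M ∧ C ≠ M)) ⊆ B := Finset.filter_subset _ _
      have hmapA' : ∀ C ∈ A.filter (fun C => C ⊆ M ∧ C ≠ M),
          φ C ∈ B.filter (fun C => C ⊆ M ∧ C ≠ M) := by
        intro C hC'
        simp only [Finset.mem_filter] at hC'
        obtain ⟨hCA, hCsM, hCne⟩ := hC'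
        simp only [Finset.mem_filter]
        refine ⟨hmap C hCA, ?_, ?_⟩
        · exact (hmaxfix M hM) ▸ hmono C hCA M hMA hCsM
        · intro h
          exact hCne (hinj (by exact_mod_cast hCA) (by exact_mod_cast hMA)
            (by rw [h, hmaxfix M hM]))
      have hcard' : ∀ (S : Finset (Finset I)), Lam S → Bin S → M ∈ S →
          (S.filter (fun C => C ⊆ M ∧ C ≠ M)).card + 2 = M.card := by
        intro S hLS hBS hMS
        have h1 : S.filter (fun C => C ⊆ M ∧ C ≠ M) = (S.filter (· ⊆ M)).erase M := by
          ext E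
          simp only [Finset.mem_filter, Finset.mem_erase]
          tauto
        have h2 : M ∈ S.filter (· ⊆ M) := by simp [hMS]
        have h3 := count_below hLS hBS M.card M hMS le_rfl
        have h4 : 0 < (S.filter (· ⊆ M)).card := Finset.card_pos.mpr ⟨M, h2⟩
        rw [h1, Finset.card_erase_of_mem h2]
        omega
      have hcA' := hcard' A hLA hBA hMA
      have hcB' := hcard' B hLB hBB hMB
      have himg' : (A.filter (fun C => C ⊆ M ∧ C ≠ M)).image φ
          = B.filter (fun C => C ⊆ M ∧ C ≠ M) := by
        apply Finset.eq_of_subset_of_card_le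
        · intro N hN
          obtain ⟨C, hC', rfl⟩ := Finset.mem_image.mp hN
          exact hmapA' C hC'
        · rw [Finset.card_image_of_injOn (hinj.mono (by exact_mod_cast hAsub))]
          omega
      have hA'lt : (A.filter (fun C => C ⊆ M ∧ C ≠ M)).card < A.card := by
        apply Finset.card_lt_card
        refine ⟨hAsub, fun h => ?_⟩
        have := h hMA
        simp at this
      have := ih (A.filter (fun C => C ⊆ M ∧ C ≠ M)) (B.filter (fun C => C ⊆ M ∧ C ≠ M)) φ
        (by omega)
        (lam_subset hLA hAsub) (bin_filter hBA M)
        (lam_subset hLB hBsub) (bin_filter hBB M)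
        (hinj.mono (by exact_mod_cast hAsub))
        hmapA'
        (fun C hC' => hsub C (hAsub hC'))
        (fun C hC' D hD' h => hmono C (hAsub hC') D (hAsub hD') h)
        himg'
      exact this C (by simp [hC, hCM, hne])
    intro C hC
    obtain ⟨M, hM, hCM⟩ := exists_max hC
    by_cases h : C = M
    · subst h; exact hmaxfix C hM
    · exact hrec M hM C hC hCM h

end Stmt13Aux


/-- if `F1`, `F2` are forests on `I` with disjoint supports, there
is exactly one pair `(F, V1 ⊔ V2 = V(F))` with `F1 ∈ γ(F,V1)` and
`F2 ∈ γ(F,V2)`; moreover for this pair `Supp(F) = Supp(F1) ⊔ Supp(F2)` and `F`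
coincides with `F1` and `F2` on their supports (its clades are exactly those of
`F1` together with those of `F2`). -/
lemma forest_ext {I : Type*} [DecidableEq I] {F G : Forest I}
    (h1 : F.ground = G.ground) (h2 : F.clades = G.clades) : F = G := by
  cases F; cases G; simp_all

theorem stmt_13 (I : Type*) [Fintype I] [DecidableEq I] (F1 F2 : Forest I)
    (hg1 : F1.ground = Finset.univ) (hg2 : F2.ground = Finset.univ)
    (hd : Disjoint F1.supp F2.supp) :
    (∃! p : Forest I × Finset (Finset I) × Finset (Finset I),
        p.2.1 ∪ p.2.2 = p.1.clades ∧ Disjoint p.2.1 p.2.2 ∧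
        F1 ∈ Forest.gamma p.1 p.2.1 ∧ F2 ∈ Forest.gamma p.1 p.2.2) ∧
    (∀ p : Forest I × Finset (Finset I) × Finset (Finset I),
        p.2.1 ∪ p.2.2 = p.1.clades → Disjoint p.2.1 p.2.2 →
        F1 ∈ Forest.gamma p.1 p.2.1 → F2 ∈ Forest.gamma p.1 p.2.2 →
        p.1.supp = F1.supp ∪ F2.supp ∧ p.1.clades = F1.clades ∪ F2.clades) := by
  
  classical
  have hB1 : Stmt13Aux.Bin F1.clades := F1.binary
  have hB2 : Stmt13Aux.Bin F2.clades := F2.binary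
  have hsupp1 : ∀ C ∈ F1.clades, C ⊆ F1.supp := fun C hC => Finset.le_sup (f := id) hC
  have hsupp2 : ∀ C ∈ F2.clades, C ⊆ F2.supp := fun C hC => Finset.le_sup (f := id) hC
  have hcross : ∀ C ∈ F1.clades, ∀ D ∈ F2.clades, Disjoint C D := fun C hC D hD =>
    hd.mono (hsupp1 C hC) (hsupp2 D hD)
  have hdisjclades : Disjoint F1.clades F2.clades := by
    rw [Finset.disjoint_left]
    intro C hC1 hC2
    obtain ⟨a, ha⟩ := Stmt13Aux.nonempty_of_mem hB1 hC1
    exact Finset.disjoint_left.mp (hcross C hC1 C hC2) ha ha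
  have hLU : Stmt13Aux.Lam (F1.clades ∪ F2.clades) := by
    intro C hC D hD
    rcases Finset.mem_union.mp hC with h1 | h1 <;> rcases Finset.mem_union.mp hD with h2 | h2
    · exact F1.laminar C h1 D h2
    · exact Or.inr (Or.inr (hcross C h1 D h2))
    · exact Or.inr (Or.inr (hcross D h2 C h1).symm)
    · exact F2.laminar C h1 D h2
  have hBU : Stmt13Aux.Bin (F1.clades ∪ F2.clades) := by
    intro C hC
    rcases Finset.mem_union.mp hC with h | h
    · obtain ⟨X, Y, hX, hY, hdj, hun, hXC, hYC⟩ := F1.binary C h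
      exact ⟨X, Y, hX.imp (fun h' => Finset.mem_union_left _ h') id,
        hY.imp (fun h' => Finset.mem_union_left _ h') id, hdj, hun, hXC, hYC⟩
    · obtain ⟨X, Y, hX, hY, hdj, hun, hXC, hYC⟩ := F2.binary C h
      exact ⟨X, Y, hX.imp (fun h' => Finset.mem_union_right _ h') id,
        hY.imp (fun h' => Finset.mem_union_right _ h') id, hdj, hun, hXC, hYC⟩
  -- the canonical forest
  let Fc : Forest I := ⟨Finset.univ, F1.clades ∪ F2.clades,
    fun C _ => Finset.subset_univ C, hLU, hBU⟩
  have hmem1 : F1 ∈ Forest.gamma Fc F1.clades :=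
    ⟨hg1, id, Set.injOn_id _, fun C hC => Finset.mem_union_left _ hC,
      fun C _ => Finset.Subset.refl C, fun _ _ _ _ h => h, Finset.image_id⟩
  have hmem2 : F2 ∈ Forest.gamma Fc F2.clades :=
    ⟨hg2, id, Set.injOn_id _, fun C hC => Finset.mem_union_right _ hC,
      fun C _ => Finset.Subset.refl C, fun _ _ _ _ h => h, Finset.image_id⟩
  -- the key uniqueness argument
  have huniq : ∀ p : Forest I × Finset (Finset I) × Finset (Finset I),
      p.2.1 ∪ p.2.2 = p.1.clades → Disjoint p.2.1 p.2.2 →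
      F1 ∈ Forest.gamma p.1 p.2.1 → F2 ∈ Forest.gamma p.1 p.2.2 →
      p.1.clades = F1.clades ∪ F2.clades ∧ p.2.1 = F1.clades ∧ p.2.2 = F2.clades ∧
        p.1.ground = Finset.univ := by
    rintro ⟨F, V1, V2⟩ hun hdv ⟨hgr1, φ1, hinj1, hmap1, hsub1, hmono1, himg1⟩
      ⟨hgr2, φ2, hinj2, hmap2, hsub2, hmono2, himg2⟩
    simp only at hun hdv hgr1 hgr2 himg1 himg2 hmap1 hmap2 ⊢
    set φ : Finset I → Finset I := fun C => if C ∈ F1.clades then φ1 C else φ2 C with hφdef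
    have hφ1 : ∀ C ∈ F1.clades, φ C = φ1 C := fun C hC => by simp [hφdef, hC]
    have hφ2 : ∀ C ∈ F2.clades, φ C = φ2 C := fun C hC => by
      have h : C ∉ F1.clades := Finset.disjoint_right.mp hdisjclades hC
      simp [hφdef, h]
    have hφV1 : ∀ C ∈ F1.clades, φ C ∈ V1 := by
      intro C hC
      rw [hφ1 C hC, ← himg1]
      exact Finset.mem_image_of_mem φ1 hC
    have hφV2 : ∀ C ∈ F2.clades, φ C ∈ V2 := by
      intro C hC
      rw [hφ2 C hC, ← himg2]
      exact Finset.mem_image_of_mem φ2 hC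
    have hmapU : ∀ C ∈ F1.clades ∪ F2.clades, φ C ∈ F.clades := by
      intro C hC
      rcases Finset.mem_union.mp hC with h | h
      · exact hun ▸ Finset.mem_union_left _ (hφV1 C h)
      · exact hun ▸ Finset.mem_union_right _ (hφV2 C h)
    have hsubU : ∀ C ∈ F1.clades ∪ F2.clades, C ⊆ φ C := by
      intro C hC
      rcases Finset.mem_union.mp hC with h | h
      · rw [hφ1 C h]; exact hsub1 C h
      · rw [hφ2 C h]; exact hsub2 C h
    have hinjU : Set.InjOn φ ((F1.clades ∪ F2.clades : Finset (Finset I)) : Set (Finset I)) := by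
      intro C hC D hD heq
      rw [Finset.mem_coe, Finset.mem_union] at hC hD
      by_cases hC1 : C ∈ F1.clades <;> by_cases hD1 : D ∈ F1.clades
      · exact hinj1 (Finset.mem_coe.mpr hC1) (Finset.mem_coe.mpr hD1)
          (by rwa [hφ1 C hC1, hφ1 D hD1] at heq)
      · have hD2 : D ∈ F2.clades := hD.resolve_left hD1
        exact absurd (heq ▸ hφV1 C hC1) (Finset.disjoint_right.mp hdv (hφV2 D hD2))
      · have hC2 : C ∈ F2.clades := hC.resolve_left hC1
        exact absurd (heq ▸ hφV2 C hC2) (Finset.disjoint_left.mp hdv (hφV1 D hD1))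
      · have hC2 : C ∈ F2.clades := hC.resolve_left hC1
        have hD2 : D ∈ F2.clades := hD.resolve_left hD1
        exact hinj2 (Finset.mem_coe.mpr hC2) (Finset.mem_coe.mpr hD2)
          (by rwa [hφ2 C hC2, hφ2 D hD2] at heq)
    have hmonoU : ∀ C ∈ F1.clades ∪ F2.clades, ∀ D ∈ F1.clades ∪ F2.clades,
        C ⊆ D → φ C ⊆ φ D := by
      intro C hC D hD hsubCD
      rcases Finset.mem_union.mp hC with h1 | h1 <;> rcases Finset.mem_union.mp hD with h2 | h2
      · rw [hφ1 C h1, hφ1 D h2]; exact hmono1 C h1 D h2 hsubCD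
      · exfalso
        obtain ⟨a, ha⟩ := Stmt13Aux.nonempty_of_mem hB1 h1
        exact Finset.disjoint_left.mp hd (hsupp1 C h1 ha) (hsupp2 D h2 (hsubCD ha))
      · exfalso
        obtain ⟨a, ha⟩ := Stmt13Aux.nonempty_of_mem hB2 h1
        exact Finset.disjoint_left.mp hd (hsupp1 D h2 (hsubCD ha)) (hsupp2 C h1 ha)
      · rw [hφ2 C h1, hφ2 D h2]; exact hmono2 C h1 D h2 hsubCD
    have himgU : (F1.clades ∪ F2.clades).image φ = F.clades := by
      rw [Finset.image_union, ← hun]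
      congr 1
      · rw [← himg1]
        exact Finset.image_congr (fun C hC => hφ1 C (Finset.mem_coe.mp hC))
      · rw [← himg2]
        exact Finset.image_congr (fun C hC => hφ2 C (Finset.mem_coe.mp hC))
    have hfix : ∀ C ∈ F1.clades ∪ F2.clades, φ C = C :=
      Stmt13Aux.rigid (F1.clades ∪ F2.clades).card (F1.clades ∪ F2.clades) F.clades φ
        le_rfl hLU hBU F.laminar F.binary hinjU hmapU hsubU hmonoU himgU
    have hclades : F.clades = F1.clades ∪ F2.clades := by
      have h : (F1.clades ∪ F2.clades).image φ = (F1.clades ∪ F2.clades).image id :=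
        Finset.image_congr (fun C hC => hfix C (Finset.mem_coe.mp hC))
      rw [← himgU, h, Finset.image_id]
    have hV1 : V1 = F1.clades := by
      have h : F1.clades.image φ1 = F1.clades.image id :=
        Finset.image_congr (fun C hC => by
          have hmem : C ∈ F1.clades := Finset.mem_coe.mp hC
          exact (hφ1 C hmem).symm.trans (hfix C (Finset.mem_union_left _ hmem)))
      rw [← himg1, h, Finset.image_id]
    have hV2 : V2 = F2.clades := by
      have h : F2.clades.image φ2 = F2.clades.image id :=
        Finset.image_congr (fun C hC => by
          have hmem : C ∈ F2.clades := Finset.mem_coe.mp hC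
          exact (hφ2 C hmem).symm.trans (hfix C (Finset.mem_union_right _ hmem)))
      rw [← himg2, h, Finset.image_id]
    exact ⟨hclades, hV1, hV2, hgr1 ▸ hg1⟩
  constructor
  · refine ⟨(Fc, F1.clades, F2.clades), ⟨rfl, hdisjclades, hmem1, hmem2⟩, ?_⟩
    rintro ⟨F, V1, V2⟩ ⟨hun, hdv, hm1, hm2⟩
    obtain ⟨hcl, hv1, hv2, hgr⟩ := huniq (F, V1, V2) hun hdv hm1 hm2
    have hF : F = Fc := forest_ext hgr hcl
    simp only [Prod.mk.injEq]
    exact ⟨hF, hv1, hv2⟩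
  · intro p h1 h2 h3 h4
    obtain ⟨hcl, hv1, hv2, hgr⟩ := huniq p h1 h2 h3 h4
    refine ⟨?_, hcl⟩
    rw [Forest.supp, Forest.supp, Forest.supp, hcl, Finset.sup_union, Finset.sup_eq_union]
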